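/- CPT satisfies strict monotonicity with respect to pointwise dominance: let p = (p_1,…,p_t) be a probability vector and x, y ∈ ℝ^t outcome profiles such that x_j ≥ y_j for every j with p_j > 0 and x_j > y_j for at least one j with p_j > 0 (i.e., (p,x) strictly pointwise dominates (p,y)). Then for every reference point r ∈ ℝ, V^r(p,x) > V^r(p,y). -/
import Mathlib


/-- The decision-weight form of the CPT value of the prospect `(p, z)` with
reference point `r`, value function `v`, probability weighting functions
`wp` (for gains) and `wm` (for losses), computed using a permutation `a`
of the indices ordering `z` decreasingly.  (The value does not depend on the
choice of such a permutation.) -/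
noncomputable def cptVal {t : ℕ} (wp wm v : ℝ → ℝ) (r : ℝ) (p z : Fin t → ℝ)
    (a : Equiv.Perm (Fin t)) : ℝ :=
  ∑ j : Fin t,
    (if r ≤ z (a j) then
        wp (∑ k ∈ Finset.Iic j, p (a k)) - wp (∑ k ∈ Finset.Iio j, p (a k))
      else
        wm (∑ k ∈ Finset.Ici j, p (a k)) - wm (∑ k ∈ Finset.Ioi j, p (a k)))
      * v (z (a j))

/-- `p` is a probability vector. -/
def IsProbVec {t : ℕ} (p : Fin t → ℝ) : Prop :=
  (∀ j, 0 ≤ p j) ∧ ∑ j, p j = 1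

open Finset

noncomputable def clen (a b u w : ℝ) : ℝ := max 0 (min b w - max a u)

lemma clen_nonneg (a b u w : ℝ) : 0 ≤ clen a b u w := le_max_left _ _

lemma clen_comm (a b u w : ℝ) : clen a b u w = clen u w a b := by
  unfold clen; rw [min_comm b w, max_comm a u]

lemma clen_merge (a b u v w : ℝ) (huv : u ≤ v) (hvw : v ≤ w) :
    clen a b u v + clen a b v w = clen a b u w := by
  unfold clen
  rcases le_total v a with h | h
  · have hu : u ≤ a := le_trans huv h
    have e1 : max 0 (min b v - max a u) = 0 := by
      apply max_eq_left
      have h1 : min b v ≤ v := min_le_right _ _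
      have h2 : a ≤ max a u := le_max_left _ _
      linarith
    have e2 : max a v = max a u := by rw [max_eq_left h, max_eq_left hu]
    rw [e2, e1, zero_add]
  · rcases le_total b v with h2 | h2
    · have e0 : min b v = b := min_eq_left h2
      have e1 : min b w = b := min_eq_left (le_trans h2 hvw)
      have e2 : max 0 (min b w - max a v) = 0 := by
        apply max_eq_left
        have h3 : v ≤ max a v := le_max_right _ _
        linarith [min_le_left b w]
      rw [e2, e0, e1, add_zero]
    · have e0 : min b v = v := min_eq_right h2
      have e1 : max a v = v := max_eq_right h
      have h3 : max a u ≤ v := max_le h huv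
      have h4 : v ≤ min b w := le_min h2 hvw
      rw [e0, e1, max_eq_right (by linarith : (0:ℝ) ≤ v - max a u),
        max_eq_right (by linarith : (0:ℝ) ≤ min b w - v),
        max_eq_right (by linarith : (0:ℝ) ≤ min b w - max a u)]
      ring

lemma clen_self (a u w : ℝ) : clen a a u w = 0 := by
  unfold clen
  have : min a w - max a u ≤ 0 := by
    have := min_le_left a w; have := le_max_left a u; linarith
  exact max_eq_left this

lemma clen_tile (d : ℕ → ℝ) (hd : Monotone d) (m : ℕ) (u w : ℝ) :
    ∑ i ∈ range m, clen (d i) (d (i + 1)) u w = clen (d 0) (d m) u w := by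
  induction m with
  | zero => simp [clen_self]
  | succ m ih =>
      rw [sum_range_succ, ih, clen_comm (d 0) (d m), clen_comm (d m), clen_comm (d 0) (d (m+1)),
        clen_merge u w _ _ _ (hd (Nat.zero_le m)) (hd (Nat.le_succ m))]

lemma abel_sum (B G : ℕ → ℝ) (t : ℕ) :
    ∑ j ∈ range t, (B (j + 1) - B j) * G j
      = B t * G t - B 0 * G 0 - ∑ j ∈ range t, B (j + 1) * (G (j + 1) - G j) := by
  induction t with
  | zero => simp
  | succ t ih => rw [sum_range_succ, sum_range_succ, ih]; ring

lemma downclosed_eq_range (S : Finset ℕ) (h : ∀ k ∈ S, ∀ k', k' ≤ k → k' ∈ S) :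
    S = range S.card := by
  rcases S.eq_empty_or_nonempty with rfl | hne
  · simp
  · have hS : S = range (S.max' hne + 1) := by
      ext k
      simp only [mem_range, Nat.lt_succ_iff]
      exact ⟨fun hk => S.le_max' k hk, fun hk => h _ (S.max'_mem hne) k hk⟩
    rw [hS, card_range]

lemma clen_pos_iff (a b u w : ℝ) : 0 < clen a b u w ↔ max a u < min b w := by
  unfold clen
  constructor
  · intro h
    by_contra hcon
    push_neg at hcon
    rw [max_eq_left (by linarith)] at h
    exact lt_irrefl _ h
  · intro h
    rw [max_eq_right (by linarith)]
    linarith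


lemma clen_eval (a b u w : ℝ) (hau : a ≤ u) (hwb : w ≤ b) (huw : u ≤ w) :
    clen a b u w = w - u := by
  unfold clen
  rw [min_eq_right hwb, max_eq_right hau, max_eq_right (sub_nonneg.mpr huw)]

lemma core_rep (t n : ℕ) (B g c : ℕ → ℝ) (hg : Antitone g) (hgt : g t = 0)
    (hc : Monotone c) (hc0 : c 0 = 0) (hcn : g 0 ≤ c n)
    (hmem : ∀ j, j < t → ∃ i, i ≤ n ∧ c i = g j) (hB0 : B 0 = 0) :
    ∑ j ∈ range t, (B (j + 1) - B j) * g j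
      = ∑ i ∈ range n, B (((range t).filter fun k => c (i + 1) ≤ g k).card) * (c (i + 1) - c i) := by
  have hgnn : ∀ j, j ≤ t → 0 ≤ g j := fun j hj => hgt ▸ hg hj
  have hcnn : ∀ i, 0 ≤ c i := fun i => hc0 ▸ hc (Nat.zero_le i)
  set N : ℕ → ℕ := fun i => ((range t).filter fun k => c (i + 1) ≤ g k).card with hN
  -- Step C
  have stepC : ∀ j, j < t →
      g j - g (j + 1) = ∑ i ∈ range n, clen (c i) (c (i + 1)) (g (j + 1)) (g j) := by
    intro j hj
    rw [clen_tile c hc n,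
      clen_eval _ _ _ _ (hc0 ▸ hgnn (j + 1) hj) (le_trans (hg (Nat.zero_le j)) hcn)
        (hg (Nat.le_succ j))]
  -- Step D
  have stepD : ∀ i, i < n →
      c (i + 1) - c i = (∑ j ∈ range t, clen (c i) (c (i + 1)) (g (j + 1)) (g j))
        + clen (c i) (c (i + 1)) (g 0) (c n) := by
    intro i hi
    have he : Monotone (fun j => g (t - j)) := fun j1 j2 h => hg (Nat.sub_le_sub_left h t)
    have h1 : ∑ j ∈ range t, clen (c i) (c (i + 1)) (g (j + 1)) (g j)
        = clen (c i) (c (i + 1)) (g t) (g 0) := by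
      rw [← Finset.sum_range_reflect]
      have : ∀ j ∈ range t,
          clen (c i) (c (i + 1)) (g (t - 1 - j + 1)) (g (t - 1 - j))
            = clen (g (t - j)) (g (t - (j + 1))) (c i) (c (i + 1)) := by
        intro j hj
        rw [mem_range] at hj
        have e1 : t - 1 - j + 1 = t - j := by omega
        have e2 : t - 1 - j = t - (j + 1) := by omega
        rw [e1, e2, clen_comm]
      rw [sum_congr rfl this, clen_tile (fun j => g (t - j)) he t, clen_comm]
      have e3 : t - 0 = t := by omega
      have e4 : t - t = 0 := by omega
      rw [e3, e4]
    rw [h1, hgt, clen_merge _ _ _ _ _ (hgnn 0 (Nat.zero_le t)) hcn, clen_comm,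
      clen_eval _ _ _ _ (hcnn i) (hc (by omega : i + 1 ≤ n)) (hc (Nat.le_succ i))]
  -- rest term vanishes
  have hrest : ∀ i, B (N i) * clen (c i) (c (i + 1)) (g 0) (c n) = 0 := by
    intro i
    rcases (clen_nonneg (c i) (c (i + 1)) (g 0) (c n)).eq_or_lt with h | h
    · rw [← h, mul_zero]
    · have hlt : g 0 < c (i + 1) := by
        have := (clen_pos_iff _ _ _ _).mp h
        have h1 := le_max_right (c i) (g 0)
        have h2 := min_le_left (c (i + 1)) (c n)
        linarith
      have : ((range t).filter fun k => c (i + 1) ≤ g k) = ∅ := by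
        apply filter_eq_empty_iff.mpr
        intro k _
        push_neg
        exact lt_of_le_of_lt (hg (Nat.zero_le k)) hlt
      rw [hN]
      simp only [this, card_empty, hB0, zero_mul]
  -- Step E
  have stepE : ∀ i, i < n → ∀ j, j < t →
      B (j + 1) * clen (c i) (c (i + 1)) (g (j + 1)) (g j)
        = B (N i) * clen (c i) (c (i + 1)) (g (j + 1)) (g j) := by
    intro i hi j hj
    rcases (clen_nonneg (c i) (c (i + 1)) (g (j + 1)) (g j)).eq_or_lt with h | h
    · rw [← h, mul_zero, mul_zero]
    · have hlt := (clen_pos_iff _ _ _ _).mp h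
      have h1 : g (j + 1) < c (i + 1) := by
        have := le_max_right (c i) (g (j + 1)); have := min_le_left (c (i + 1)) (g j); linarith
      have h2 : c i < g j := by
        have := le_max_left (c i) (g (j + 1)); have := min_le_right (c (i + 1)) (g j); linarith
      obtain ⟨i0, hi0n, hi0⟩ := hmem j hj
      have hii0 : i < i0 := by
        by_contra hcon
        push_neg at hcon
        exact absurd (hi0 ▸ hc hcon) (not_le.mpr h2)
      have h3 : c (i + 1) ≤ g j := hi0 ▸ hc hii0
      have : ((range t).filter fun k => c (i + 1) ≤ g k) = range (j + 1) := by
        ext k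
        simp only [mem_filter, mem_range]
        constructor
        · rintro ⟨hkt, hk⟩
          by_contra hcon
          push_neg at hcon
          have : g k ≤ g (j + 1) := hg hcon
          linarith
        · intro hk
          exact ⟨by omega, le_trans h3 (hg (by omega : k ≤ j))⟩
      rw [hN]
      simp only [this, card_range]
  -- assemble
  rw [abel_sum, hB0, hgt, mul_zero, zero_mul, sub_zero, zero_sub]
  rw [← Finset.sum_neg_distrib]
  have e1 : ∀ j ∈ range t, -(B (j + 1) * (g (j + 1) - g j))
      = ∑ i ∈ range n, B (j + 1) * clen (c i) (c (i + 1)) (g (j + 1)) (g j) := by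
    intro j hj
    rw [mem_range] at hj
    rw [← mul_sum, ← stepC j hj]
    ring
  rw [sum_congr rfl e1, sum_comm]
  apply sum_congr rfl
  intro i hi
  rw [mem_range] at hi
  calc ∑ j ∈ range t, B (j + 1) * clen (c i) (c (i + 1)) (g (j + 1)) (g j)
      = ∑ j ∈ range t, B (N i) * clen (c i) (c (i + 1)) (g (j + 1)) (g j) := by
        apply sum_congr rfl
        intro j hj
        exact stepE i hi j (mem_range.mp hj)
    _ = B (N i) * ((c (i + 1) - c i) - clen (c i) (c (i + 1)) (g 0) (c n)) := by
        rw [← mul_sum]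
        congr 1
        rw [stepD i hi]
        ring
    _ = B (N i) * (c (i + 1) - c i) := by
        rw [mul_sub, hrest i, sub_zero]

lemma sum_range_dite {t : ℕ} (f : Fin t → ℝ) :
    ∑ i ∈ range t, (if h : i < t then f ⟨i, h⟩ else 0) = ∑ k : Fin t, f k := by
  rw [← Fin.sum_univ_eq_sum_range (fun i => if h : i < t then f ⟨i, h⟩ else 0) t]
  apply sum_congr rfl
  intro k _
  simp

lemma cpt_rep {t : ℕ} (wp wm v : ℝ → ℝ) (r : ℝ) (p z : Fin t → ℝ) (a : Equiv.Perm (Fin t))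
    (hp : IsProbVec p) (hv : StrictMono v) (hvr : v r = 0)
    (hwp0 : wp 0 = 0) (hwm0 : wm 0 = 0)
    (ha : Antitone (fun j => z (a j)))
    (n : ℕ) (c : ℕ → ℝ) (hc : Monotone c) (hc0 : c 0 = 0)
    (hcn : ∀ j, |v (z j)| ≤ c n)
    (hmemA : ∀ j : Fin t, ∃ i, i ≤ n ∧ c i = |v (z j)|) :
    cptVal wp wm v r p z a
      = ∑ i ∈ range n,
          ((wp (∑ j ∈ univ.filter (fun j => c (i + 1) ≤ v (z j)), p j)
            - wm (∑ j ∈ univ.filter (fun j => v (z j) ≤ -(c (i + 1))), p j))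
          * (c (i + 1) - c i)) := by
  have hva : Antitone (fun k : Fin t => v (z (a k))) := fun k1 k2 h12 => hv.monotone (ha h12)
  set q : ℕ → ℝ := fun i => if h : i < t then p (a ⟨i, h⟩) else 0 with hq
  set S : ℕ → ℝ := fun m => ∑ i ∈ range m, q i with hSdef
  set Z : ℕ → ℝ := fun i => if h : i < t then v (z (a ⟨i, h⟩)) else 0 with hZdef
  have hZv : ∀ k : Fin t, Z (k : ℕ) = v (z (a k)) := by
    intro k; rw [hZdef]; dsimp only; rw [dif_pos k.2]
  have hZanti : ∀ k1 k2 : ℕ, k1 ≤ k2 → k2 < t → Z k2 ≤ Z k1 := by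
    intro k1 k2 h12 h2
    have h1 : k1 < t := lt_of_le_of_lt h12 h2
    rw [hZdef]; dsimp only; rw [dif_pos h1, dif_pos h2]
    exact hva (Fin.mk_le_mk.mpr h12)
  set g : ℕ → ℝ := fun j => if j < t then max (Z j) 0 else 0 with hgdef
  set l : ℕ → ℝ := fun j => if j < t then min (Z j) 0 else 0 with hldef
  set g' : ℕ → ℝ := fun j => if j < t then -(min (Z (t - 1 - j)) 0) else 0 with hg'def
  set B : ℕ → ℝ := fun m => wp (S m) with hBdef
  set B' : ℕ → ℝ := fun m => wm (1 - S (t - m)) with hB'def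
  have hqnn : ∀ i, 0 ≤ q i := by
    intro i; rw [hq]; dsimp only; split
    · exact hp.1 _
    · exact le_rfl
  have hfilter : ∀ m, m ≤ t →
      S m = ∑ k ∈ univ.filter (fun k : Fin t => (k : ℕ) < m), p (a k) := by
    intro m hm
    have e1 : S m = ∑ i ∈ range t, (if i < m then q i else 0) := by
      rw [hSdef]; dsimp only; rw [← sum_filter]
      apply sum_congr
      · ext k; simp only [mem_filter, mem_range]; omega
      · intros; rfl
    have e2 : ∀ i ∈ range t, (if i < m then q i else 0)
        = (if h : i < t then (if i < m then p (a ⟨i, h⟩) else 0) else 0) := by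
      intro i hi; rw [mem_range] at hi
      rw [hq]; dsimp only; rw [dif_pos hi, dif_pos hi]
    rw [e1, sum_congr rfl e2, sum_range_dite (fun k : Fin t => if (k : ℕ) < m then p (a k) else 0),
      sum_filter]
  have hS1 : S t = 1 := by
    rw [hfilter t le_rfl]
    have : (univ.filter (fun k : Fin t => (k : ℕ) < t)) = univ := by
      apply filter_true_of_mem; intro k _; exact k.2
    rw [this, Equiv.sum_comp a p, hp.2]
  have hIic : ∀ j : Fin t, ∑ k ∈ Iic j, p (a k) = S ((j : ℕ) + 1) := by
    intro j
    rw [hfilter ((j : ℕ) + 1) j.2]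
    apply sum_congr _ (fun _ _ => rfl)
    ext k; simp only [mem_Iic, mem_filter, mem_univ, true_and, Fin.le_def]; omega
  have hIio : ∀ j : Fin t, ∑ k ∈ Iio j, p (a k) = S (j : ℕ) := by
    intro j
    rw [hfilter (j : ℕ) (le_of_lt j.2)]
    apply sum_congr _ (fun _ _ => rfl)
    ext k; simp only [mem_Iio, mem_filter, mem_univ, true_and, Fin.lt_def]
  have hIci : ∀ j : Fin t, ∑ k ∈ Ici j, p (a k) = 1 - S (j : ℕ) := by
    intro j
    have e1 : Iio j = univ.filter (fun k : Fin t => (k : ℕ) < (j : ℕ)) := by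
      ext k; simp only [mem_Iio, mem_filter, mem_univ, true_and, Fin.lt_def]
    have e2 : Ici j = univ.filter (fun k : Fin t => ¬ ((k : ℕ) < (j : ℕ))) := by
      ext k; simp only [mem_Ici, mem_filter, mem_univ, true_and, Fin.le_def]; omega
    have e3 := sum_filter_add_sum_filter_not (univ : Finset (Fin t))
      (fun k : Fin t => (k : ℕ) < (j : ℕ)) (fun k => p (a k))
    rw [Equiv.sum_comp a p, hp.2] at e3
    rw [← hfilter (j : ℕ) (le_of_lt j.2)] at e3
    rw [e2]
    linarith
  have hIoi : ∀ j : Fin t, ∑ k ∈ Ioi j, p (a k) = 1 - S ((j : ℕ) + 1) := by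
    intro j
    have e2 : Ioi j = univ.filter (fun k : Fin t => ¬ ((k : ℕ) < (j : ℕ) + 1)) := by
      ext k; simp only [mem_Ioi, mem_filter, mem_univ, true_and, Fin.lt_def]; omega
    have e3 := sum_filter_add_sum_filter_not (univ : Finset (Fin t))
      (fun k : Fin t => (k : ℕ) < (j : ℕ) + 1) (fun k => p (a k))
    rw [Equiv.sum_comp a p, hp.2] at e3
    rw [← hfilter ((j : ℕ) + 1) j.2] at e3
    rw [e2]
    linarith
  -- step REP1: pointwise rewriting of the cpt term
  have hterm : ∀ j : Fin t,
      (if r ≤ z (a j) then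
          wp (∑ k ∈ Finset.Iic j, p (a k)) - wp (∑ k ∈ Finset.Iio j, p (a k))
        else
          wm (∑ k ∈ Finset.Ici j, p (a k)) - wm (∑ k ∈ Finset.Ioi j, p (a k)))
        * v (z (a j))
      = (wp (S ((j : ℕ) + 1)) - wp (S (j : ℕ))) * g (j : ℕ)
          + (wm (1 - S (j : ℕ)) - wm (1 - S ((j : ℕ) + 1))) * l (j : ℕ) := by
    intro j
    rw [hIic j, hIio j, hIci j, hIoi j]
    have hgj : g (j : ℕ) = max (v (z (a j))) 0 := by
      rw [hgdef]; dsimp only; rw [if_pos j.2, hZv j]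
    have hlj : l (j : ℕ) = min (v (z (a j))) 0 := by
      rw [hldef]; dsimp only; rw [if_pos j.2, hZv j]
    by_cases hr : r ≤ z (a j)
    · have h0 : 0 ≤ v (z (a j)) := hvr ▸ hv.monotone hr
      rw [if_pos hr, hgj, hlj, max_eq_left h0, min_eq_right h0, mul_zero, add_zero]
    · have h0 : v (z (a j)) < 0 := hvr ▸ hv (lt_of_not_ge hr)
      rw [if_neg hr, hgj, hlj, max_eq_right h0.le, min_eq_left h0.le, mul_zero, zero_add]
  have hrep1 : cptVal wp wm v r p z a
      = (∑ j ∈ range t, (B (j + 1) - B j) * g j)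
        + (∑ j ∈ range t, (wm (1 - S j) - wm (1 - S (j + 1))) * l j) := by
    unfold cptVal
    rw [sum_congr rfl (fun j _ => hterm j)]
    rw [Fin.sum_univ_eq_sum_range (fun i =>
      (wp (S (i + 1)) - wp (S i)) * g i + (wm (1 - S i) - wm (1 - S (i + 1))) * l i) t]
    rw [sum_add_distrib]
  -- gain side
  have hgnn : ∀ j, 0 ≤ g j := by
    intro j; rw [hgdef]; dsimp only; split
    · exact le_max_right _ _
    · exact le_rfl
  have hganti : Antitone g := by
    intro j1 j2 h12
    by_cases h2 : j2 < t
    · have h1 : j1 < t := lt_of_le_of_lt h12 h2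
      rw [hgdef]; dsimp only; rw [if_pos h1, if_pos h2]
      exact max_le_max (hZanti j1 j2 h12 h2) le_rfl
    · have e : g j2 = 0 := by rw [hgdef]; dsimp only; rw [if_neg h2]
      rw [e]; exact hgnn j1
  have hgt0 : g t = 0 := by rw [hgdef]; dsimp only; rw [if_neg (lt_irrefl t)]
  have hcnn : ∀ i, 0 ≤ c i := fun i => hc0 ▸ hc (Nat.zero_le i)
  have hgcn : g 0 ≤ c n := by
    rw [hgdef]; dsimp only; split
    · next h0 =>
        rw [hZv ⟨0, h0⟩]
        exact le_trans (max_le (le_abs_self _) (abs_nonneg _)) (hcn (a ⟨0, h0⟩))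
    · exact hcnn n
  have hgmem : ∀ j, j < t → ∃ i, i ≤ n ∧ c i = g j := by
    intro j hj
    rw [hgdef]; dsimp only; rw [if_pos hj, hZv ⟨j, hj⟩]
    rcases le_or_gt 0 (v (z (a ⟨j, hj⟩))) with h0 | h0
    · obtain ⟨i, hin, hci⟩ := hmemA (a ⟨j, hj⟩)
      exact ⟨i, hin, by rw [hci, abs_of_nonneg h0, max_eq_left h0]⟩
    · exact ⟨0, Nat.zero_le n, by rw [hc0, max_eq_right h0.le]⟩
  have hB0 : B 0 = 0 := by
    rw [hBdef]; dsimp only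
    have : S 0 = 0 := by rw [hSdef]; dsimp only; rw [sum_range_zero]
    rw [this, hwp0]
  have hgain := core_rep t n B g c hganti hgt0 hc hc0 hgcn hgmem hB0
  -- loss side
  have hg'nn : ∀ j, 0 ≤ g' j := by
    intro j; rw [hg'def]; dsimp only; split
    · rw [neg_nonneg]; exact min_le_right _ _
    · exact le_rfl
  have hg'anti : Antitone g' := by
    intro j1 j2 h12
    by_cases h2 : j2 < t
    · have h1 : j1 < t := lt_of_le_of_lt h12 h2
      rw [hg'def]; dsimp only; rw [if_pos h1, if_pos h2]
      apply neg_le_neg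
      exact min_le_min (hZanti (t - 1 - j2) (t - 1 - j1) (by omega) (by omega)) le_rfl
    · have e : g' j2 = 0 := by rw [hg'def]; dsimp only; rw [if_neg h2]
      rw [e]; exact hg'nn j1
  have hg't : g' t = 0 := by rw [hg'def]; dsimp only; rw [if_neg (lt_irrefl t)]
  have hneg_min_le_abs : ∀ x : ℝ, -(min x 0) ≤ |x| := by
    intro x
    rcases le_total x 0 with h | h
    · rw [min_eq_left h, abs_of_nonpos h]
    · rw [min_eq_right h, neg_zero]; exact abs_nonneg x
  have hg'cn : g' 0 ≤ c n := by
    rw [hg'def]; dsimp only; split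
    · next h0 =>
        rw [hZv ⟨t - 1 - 0, by omega⟩]
        exact le_trans (hneg_min_le_abs _) (hcn (a ⟨t - 1 - 0, by omega⟩))
    · exact hcnn n
  have hg'mem : ∀ j, j < t → ∃ i, i ≤ n ∧ c i = g' j := by
    intro j hj
    rw [hg'def]; dsimp only; rw [if_pos hj, hZv ⟨t - 1 - j, by omega⟩]
    rcases le_or_gt 0 (v (z (a ⟨t - 1 - j, by omega⟩))) with h0 | h0
    · exact ⟨0, Nat.zero_le n, by rw [hc0, min_eq_right h0, neg_zero]⟩
    · obtain ⟨i, hin, hci⟩ := hmemA (a ⟨t - 1 - j, by omega⟩)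
      exact ⟨i, hin, by rw [hci, abs_of_neg h0, min_eq_left h0.le]⟩
  have hB'0 : B' 0 = 0 := by
    rw [hB'def]; dsimp only; rw [Nat.sub_zero, hS1, sub_self, hwm0]
  have hloss0 := core_rep t n B' g' c hg'anti hg't hc hc0 hg'cn hg'mem hB'0
  have hlossrefl : ∑ j ∈ range t, (wm (1 - S j) - wm (1 - S (j + 1))) * l j
      = -∑ j ∈ range t, (B' (j + 1) - B' j) * g' j := by
    have e : ∀ j ∈ range t, (wm (1 - S j) - wm (1 - S (j + 1))) * l j
        = -((fun j => (B' (j + 1) - B' j) * g' j) (t - 1 - j)) := by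
      intro j hj
      rw [mem_range] at hj
      dsimp only
      have e1 : B' (t - 1 - j + 1) = wm (1 - S j) := by
        rw [hB'def]; dsimp only
        have : t - (t - 1 - j + 1) = j := by omega
        rw [this]
      have e2 : B' (t - 1 - j) = wm (1 - S (j + 1)) := by
        rw [hB'def]; dsimp only
        have : t - (t - 1 - j) = j + 1 := by omega
        rw [this]
      have e3 : g' (t - 1 - j) = -(l j) := by
        rw [hg'def, hldef]; dsimp only
        rw [if_pos (show t - 1 - j < t by omega), if_pos hj]
        have : t - 1 - (t - 1 - j) = j := by omega
        rw [this]
      rw [e1, e2, e3]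
      ring
    rw [sum_congr rfl e, Finset.sum_neg_distrib,
      Finset.sum_range_reflect (fun j => (B' (j + 1) - B' j) * g' j) t]
  rw [hrep1, hgain, hlossrefl, hloss0, ← sub_eq_add_neg, ← sum_sub_distrib]
  apply sum_congr rfl
  intro i hi
  rw [mem_range] at hi
  rcases eq_or_lt_of_le (hc (Nat.le_succ i)) with he | hlt
  · have e0 : c (i + 1) - c i = 0 := by rw [← he]; ring
    rw [e0]; ring
  · have hs : 0 < c (i + 1) := lt_of_le_of_lt (hcnn i) hlt
    -- gain conversion
    have claimG : B (((range t).filter fun k => c (i + 1) ≤ g k).card)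
        = wp (∑ j ∈ univ.filter (fun j => c (i + 1) ≤ v (z j)), p j) := by
      rw [hBdef]; dsimp only
      congr 1
      have hdc : ∀ k ∈ (range t).filter (fun k => c (i + 1) ≤ g k),
          ∀ k', k' ≤ k → k' ∈ (range t).filter (fun k => c (i + 1) ≤ g k) := by
        intro k hk k' hk'
        rw [mem_filter, mem_range] at hk ⊢
        exact ⟨lt_of_le_of_lt hk' hk.1, le_trans hk.2 (hganti hk')⟩
      have hFr := downclosed_eq_range _ hdc
      calc S (((range t).filter fun k => c (i + 1) ≤ g k).card)
          = ∑ k ∈ (range t).filter (fun k => c (i + 1) ≤ g k), q k := by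
            rw [hSdef]; dsimp only; rw [← hFr]
        _ = ∑ k ∈ range t, if c (i + 1) ≤ g k then q k else 0 := sum_filter _ _
        _ = ∑ k ∈ range t, (if h : k < t then
              (if c (i + 1) ≤ v (z (a ⟨k, h⟩)) then p (a ⟨k, h⟩) else 0) else 0) := by
            apply sum_congr rfl
            intro k hk
            rw [mem_range] at hk
            rw [dif_pos hk]
            have hgk : g k = max (v (z (a ⟨k, hk⟩))) 0 := by
              rw [hgdef]; dsimp only; rw [if_pos hk, hZv ⟨k, hk⟩]
            have hqk : q k = p (a ⟨k, hk⟩) := by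
              rw [hq]; dsimp only; rw [dif_pos hk]
            have hcond : (c (i + 1) ≤ g k) ↔ (c (i + 1) ≤ v (z (a ⟨k, hk⟩))) := by
              rw [hgk, le_max_iff]
              exact or_iff_left (not_le.mpr hs)
            rw [if_congr hcond hqk rfl]
        _ = ∑ k : Fin t, (if c (i + 1) ≤ v (z (a k)) then p (a k) else 0) :=
            sum_range_dite (fun k : Fin t => if c (i + 1) ≤ v (z (a k)) then p (a k) else 0)
        _ = ∑ j : Fin t, (if c (i + 1) ≤ v (z j) then p j else 0) :=
            Equiv.sum_comp a (fun j => if c (i + 1) ≤ v (z j) then p j else 0)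
        _ = ∑ j ∈ univ.filter (fun j => c (i + 1) ≤ v (z j)), p j := (sum_filter _ _).symm
    -- loss conversion
    have claimH : B' (((range t).filter fun k => c (i + 1) ≤ g' k).card)
        = wm (∑ j ∈ univ.filter (fun j => v (z j) ≤ -(c (i + 1))), p j) := by
      have hcard : ((range t).filter fun k => c (i + 1) ≤ g' k).card
          = ((range t).filter fun k => Z k ≤ -(c (i + 1))).card := by
        apply Finset.card_bij' (fun k _ => t - 1 - k) (fun k _ => t - 1 - k)
        · intro k hk
          rw [mem_filter, mem_range] at hk ⊢
          obtain ⟨hkt, hkg⟩ := hk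
          constructor
          · omega
          · have hg'k : g' k = -(min (Z (t - 1 - k)) 0) := by
              rw [hg'def]; dsimp only; rw [if_pos hkt]
            rw [hg'k, le_neg] at hkg
            rcases min_le_iff.mp hkg with h | h
            · exact h
            · exfalso; linarith
        · intro k hk
          rw [mem_filter, mem_range] at hk ⊢
          obtain ⟨hkt, hkZ⟩ := hk
          constructor
          · omega
          · have hg'k : g' (t - 1 - k) = -(min (Z (t - 1 - (t - 1 - k))) 0) := by
              rw [hg'def]; dsimp only; rw [if_pos (show t - 1 - k < t by omega)]
            have : t - 1 - (t - 1 - k) = k := by omega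
            rw [hg'k, this, le_neg]
            exact le_trans (min_le_left _ _) hkZ
        · intro k hk
          rw [mem_filter, mem_range] at hk
          omega
        · intro k hk
          rw [mem_filter, mem_range] at hk
          omega
      rw [hB'def]; dsimp only
      rw [hcard]
      congr 1
      set F' := (range t).filter (fun k => Z k ≤ -(c (i + 1))) with hF'
      set Fc := (range t).filter (fun k => ¬ (Z k ≤ -(c (i + 1)))) with hFc
      have hdc : ∀ k ∈ Fc, ∀ k', k' ≤ k → k' ∈ Fc := by
        intro k hk k' hk'
        rw [hFc, mem_filter, mem_range] at hk ⊢
        obtain ⟨hkt, hkZ⟩ := hk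
        refine ⟨lt_of_le_of_lt hk' hkt, fun hcon => hkZ ?_⟩
        exact le_trans (hZanti k' k hk' hkt) hcon
      have hFcr := downclosed_eq_range _ hdc
      have hcards : F'.card + Fc.card = t := by
        rw [hF', hFc]
        rw [card_filter_add_card_filter_not, card_range]
      have htF : t - F'.card = Fc.card := by omega
      have hsum : ∑ k ∈ F', q k + ∑ k ∈ Fc, q k = 1 := by
        rw [hF', hFc, sum_filter_add_sum_filter_not]
        exact hS1
      have hSFc : S (t - F'.card) = ∑ k ∈ Fc, q k := by
        rw [htF, hSdef]; dsimp only; rw [← hFcr]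
      have hF'sum : ∑ k ∈ F', q k
          = ∑ j ∈ univ.filter (fun j => v (z j) ≤ -(c (i + 1))), p j := by
        calc ∑ k ∈ F', q k
            = ∑ k ∈ range t, if Z k ≤ -(c (i + 1)) then q k else 0 := by
              rw [hF']; exact sum_filter _ _
          _ = ∑ k ∈ range t, (if h : k < t then
                (if v (z (a ⟨k, h⟩)) ≤ -(c (i + 1)) then p (a ⟨k, h⟩) else 0) else 0) := by
              apply sum_congr rfl
              intro k hk
              rw [mem_range] at hk
              rw [dif_pos hk]
              have hZk : Z k = v (z (a ⟨k, hk⟩)) := hZv ⟨k, hk⟩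
              have hqk : q k = p (a ⟨k, hk⟩) := by
                rw [hq]; dsimp only; rw [dif_pos hk]
              rw [if_congr (by rw [hZk]) hqk rfl]
          _ = ∑ k : Fin t, (if v (z (a k)) ≤ -(c (i + 1)) then p (a k) else 0) :=
              sum_range_dite (fun k : Fin t => if v (z (a k)) ≤ -(c (i + 1)) then p (a k) else 0)
          _ = ∑ j : Fin t, (if v (z j) ≤ -(c (i + 1)) then p j else 0) :=
              Equiv.sum_comp a (fun j => if v (z j) ≤ -(c (i + 1)) then p j else 0)
          _ = ∑ j ∈ univ.filter (fun j => v (z j) ≤ -(c (i + 1))), p j := (sum_filter _ _).symm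
      rw [hSFc, ← hF'sum]
      linarith
    rw [claimG, claimH, sub_mul]

lemma filter_sum_mem_Icc {t : ℕ} (p : Fin t → ℝ) (hp : IsProbVec p)
    (P : Fin t → Prop) [DecidablePred P] :
    (∑ j ∈ univ.filter P, p j) ∈ Set.Icc (0 : ℝ) 1 := by
  constructor
  · exact sum_nonneg fun j _ => hp.1 j
  · rw [← hp.2]
    exact sum_le_sum_of_subset_of_nonneg (subset_univ _) (fun j _ _ => hp.1 j)

/-- CPT satisfies strict monotonicity with respect to pointwise
dominance: if `(p,x)` strictly pointwise dominates `(p,y)` then, for every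
reference point `r`, `V^r(p,x) > V^r(p,y)`.  Here `a` and `b` are permutations
ordering `x` and `y` decreasingly, respectively. -/
theorem cpt_strict_monotonicity {t : ℕ} (wp wm v : ℝ → ℝ) (r : ℝ)
    (hwpc : ContinuousOn wp (Set.Icc 0 1)) (hwmc : ContinuousOn wm (Set.Icc 0 1))
    (hwpm : StrictMonoOn wp (Set.Icc 0 1)) (hwmm : StrictMonoOn wm (Set.Icc 0 1))
    (hwp0 : wp 0 = 0) (hwp1 : wp 1 = 1) (hwm0 : wm 0 = 0) (hwm1 : wm 1 = 1)
    (hv : StrictMono v) (hvc : Continuous v) (hvr : v r = 0)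
    (p x y : Fin t → ℝ) (hp : IsProbVec p)
    (hdom : ∀ j, 0 < p j → y j ≤ x j)
    (hstrict : ∃ j, 0 < p j ∧ y j < x j)
    (a b : Equiv.Perm (Fin t))
    (ha : Antitone (fun j => x (a j))) (hb : Antitone (fun j => y (b j))) :
    cptVal wp wm v r p y b < cptVal wp wm v r p x a := by
  obtain ⟨j0, hpj0, hyx⟩ := hstrict
  have hvyx : v (y j0) < v (x j0) := hv hyx
  -- the threshold grid
  set T : Finset ℝ :=
    insert 0 ((univ.image fun j => |v (x j)|) ∪ (univ.image fun j => |v (y j)|)) with hT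
  have hT0 : (0 : ℝ) ∈ T := mem_insert_self _ _
  have hTx : ∀ j, |v (x j)| ∈ T := fun j =>
    mem_insert_of_mem (mem_union_left _ (mem_image.mpr ⟨j, mem_univ j, rfl⟩))
  have hTy : ∀ j, |v (y j)| ∈ T := fun j =>
    mem_insert_of_mem (mem_union_right _ (mem_image.mpr ⟨j, mem_univ j, rfl⟩))
  have hTnn : ∀ τ ∈ T, 0 ≤ τ := by
    intro τ hτ
    rw [hT, mem_insert, mem_union] at hτ
    rcases hτ with rfl | hτ
    · exact le_rfl
    · rcases hτ with hτ | hτ <;>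
      · obtain ⟨j, _, rfl⟩ := mem_image.mp hτ
        exact abs_nonneg _
  have hkpos : 0 < T.card := card_pos.mpr ⟨0, hT0⟩
  set n : ℕ := T.card - 1 with hn
  set e := T.orderIsoOfFin rfl with he
  set c : ℕ → ℝ := fun i => (e ⟨min i n, by omega⟩ : ℝ) with hcdef
  have hc : Monotone c := by
    intro i1 i2 h
    exact Subtype.coe_le_coe.mpr (e.monotone (Fin.mk_le_mk.mpr (by omega)))
  have hcstrict : ∀ i1 i2, i1 < i2 → i2 ≤ n → c i1 < c i2 := by
    intro i1 i2 h12 h2n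
    exact Subtype.coe_lt_coe.mpr (e.strictMono (Fin.mk_lt_mk.mpr (by omega)))
  have hcmemT : ∀ i, c i ∈ T := fun i => (e ⟨min i n, by omega⟩).2
  have hc0 : c 0 = 0 := by
    apply le_antisymm
    · have h1 : (⟨min 0 n, by omega⟩ : Fin T.card) ≤ e.symm ⟨0, hT0⟩ := by
        rw [Fin.le_def]; simp only [Fin.val_mk]; omega
      have := Subtype.coe_le_coe.mpr (e.monotone h1)
      rwa [OrderIso.apply_symm_apply] at this
    · exact hTnn _ (hcmemT 0)
  have hTcn : ∀ τ ∈ T, τ ≤ c n := by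
    intro τ hτ
    have h1 : e.symm ⟨τ, hτ⟩ ≤ (⟨min n n, by omega⟩ : Fin T.card) := by
      rw [Fin.le_def]
      simp only [Fin.val_mk]
      have := (e.symm ⟨τ, hτ⟩).2
      omega
    have := Subtype.coe_le_coe.mpr (e.monotone h1)
    rwa [OrderIso.apply_symm_apply] at this
  have hmemT : ∀ τ ∈ T, ∃ i, i ≤ n ∧ c i = τ := by
    intro τ hτ
    refine ⟨(e.symm ⟨τ, hτ⟩ : Fin T.card).val, by have := (e.symm ⟨τ, hτ⟩).2; omega, ?_⟩
    have h1 : (⟨min ((e.symm ⟨τ, hτ⟩ : Fin T.card) : ℕ) n, by omega⟩ : Fin T.card)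
        = e.symm ⟨τ, hτ⟩ := by
      apply Fin.ext
      have := (e.symm ⟨τ, hτ⟩).2
      simp only
      omega
    rw [hcdef]
    dsimp only
    rw [h1, OrderIso.apply_symm_apply]
  -- representations
  rw [cpt_rep wp wm v r p x a hp hv hvr hwp0 hwm0 ha n c hc hc0
      (fun j => hTcn _ (hTx j)) (fun j => hmemT _ (hTx j)),
    cpt_rep wp wm v r p y b hp hv hvr hwp0 hwm0 hb n c hc hc0
      (fun j => hTcn _ (hTy j)) (fun j => hmemT _ (hTy j))]
  -- comparison
  have hGle : ∀ s : ℝ,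
      ∑ j ∈ univ.filter (fun j => s ≤ v (y j)), p j
        ≤ ∑ j ∈ univ.filter (fun j => s ≤ v (x j)), p j := by
    intro s
    rw [sum_filter, sum_filter]
    apply sum_le_sum
    intro j _
    by_cases hpj : 0 < p j
    · by_cases hyj : s ≤ v (y j)
      · rw [if_pos hyj, if_pos (le_trans hyj (hv.monotone (hdom j hpj)))]
      · rw [if_neg hyj]
        split
        · exact hp.1 j
        · exact le_rfl
    · have hz : p j = 0 := le_antisymm (not_lt.mp hpj) (hp.1 j)
      split_ifs <;> simp [hz]
  have hHle : ∀ s : ℝ,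
      ∑ j ∈ univ.filter (fun j => v (x j) ≤ s), p j
        ≤ ∑ j ∈ univ.filter (fun j => v (y j) ≤ s), p j := by
    intro s
    rw [sum_filter, sum_filter]
    apply sum_le_sum
    intro j _
    by_cases hpj : 0 < p j
    · by_cases hxj : v (x j) ≤ s
      · rw [if_pos hxj, if_pos (le_trans (hv.monotone (hdom j hpj)) hxj)]
      · rw [if_neg hxj]
        split
        · exact hp.1 j
        · exact le_rfl
    · have hz : p j = 0 := le_antisymm (not_lt.mp hpj) (hp.1 j)
      split_ifs <;> simp [hz]
  apply Finset.sum_lt_sum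
  · intro i _
    have hΔ : 0 ≤ c (i + 1) - c i := sub_nonneg.mpr (hc (Nat.le_succ i))
    apply mul_le_mul_of_nonneg_right _ hΔ
    have h1 : wp (∑ j ∈ univ.filter (fun j => c (i + 1) ≤ v (y j)), p j)
        ≤ wp (∑ j ∈ univ.filter (fun j => c (i + 1) ≤ v (x j)), p j) :=
      hwpm.monotoneOn (filter_sum_mem_Icc p hp _) (filter_sum_mem_Icc p hp _) (hGle _)
    have h2 : wm (∑ j ∈ univ.filter (fun j => v (x j) ≤ -(c (i + 1))), p j)
        ≤ wm (∑ j ∈ univ.filter (fun j => v (y j) ≤ -(c (i + 1))), p j) :=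
      hwmm.monotoneOn (filter_sum_mem_Icc p hp _) (filter_sum_mem_Icc p hp _) (hHle _)
    linarith
  · -- strict inequality at a well-chosen interval
    rcases le_or_gt (v (x j0)) 0 with hcase | hcase
    · -- loss case
      have hAB : -(v (x j0)) < -(v (y j0)) := by linarith
      have hAT : -(v (x j0)) ∈ T := by rw [← abs_of_nonpos hcase]; exact hTx j0
      have hBT : -(v (y j0)) ∈ T := by
        rw [← abs_of_neg (by linarith : v (y j0) < 0)]; exact hTy j0
      obtain ⟨iA, hiAn, hciA⟩ := hmemT _ hAT
      obtain ⟨iB, hiBn, hciB⟩ := hmemT _ hBT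
      have hiAB : iA < iB := by
        by_contra hcon
        push_neg at hcon
        have := hc hcon
        rw [hciA, hciB] at this
        linarith
      refine ⟨iB - 1, mem_range.mpr (by omega), ?_⟩
      have hidx : iB - 1 + 1 = iB := by omega
      rw [hidx, hciB]
      have hΔpos : 0 < -(v (y j0)) - c (iB - 1) := by
        have := hcstrict (iB - 1) iB (by omega) hiBn
        rw [hciB] at this
        linarith
      have hstrictH :
          ∑ j ∈ univ.filter (fun j => v (x j) ≤ -(-(v (y j0)))), p j
            < ∑ j ∈ univ.filter (fun j => v (y j) ≤ -(-(v (y j0)))), p j := by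
        rw [sum_filter, sum_filter]
        apply Finset.sum_lt_sum
        · intro j _
          by_cases hpj : 0 < p j
          · by_cases hxj : v (x j) ≤ -(-(v (y j0)))
            · rw [if_pos hxj, if_pos (le_trans (hv.monotone (hdom j hpj)) hxj)]
            · rw [if_neg hxj]
              split
              · exact hp.1 j
              · exact le_rfl
          · have hz : p j = 0 := le_antisymm (not_lt.mp hpj) (hp.1 j)
            split_ifs <;> simp [hz]
        · refine ⟨j0, mem_univ j0, ?_⟩
          rw [if_neg (by rw [neg_neg]; exact not_le.mpr hvyx),
            if_pos (le_of_eq (neg_neg _).symm)]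
          exact hpj0
      have h2 : wm (∑ j ∈ univ.filter (fun j => v (x j) ≤ -(-(v (y j0)))), p j)
          < wm (∑ j ∈ univ.filter (fun j => v (y j) ≤ -(-(v (y j0)))), p j) :=
        hwmm (filter_sum_mem_Icc p hp _) (filter_sum_mem_Icc p hp _) hstrictH
      have h1 : wp (∑ j ∈ univ.filter (fun j => -(v (y j0)) ≤ v (y j)), p j)
          ≤ wp (∑ j ∈ univ.filter (fun j => -(v (y j0)) ≤ v (x j)), p j) :=
        hwpm.monotoneOn (filter_sum_mem_Icc p hp _) (filter_sum_mem_Icc p hp _) (hGle _)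
      apply mul_lt_mul_of_pos_right _ hΔpos
      linarith
    · -- gain case
      have hAB : max (v (y j0)) 0 < v (x j0) := max_lt hvyx hcase
      have hAT : max (v (y j0)) 0 ∈ T := by
        rcases le_or_gt 0 (v (y j0)) with h0 | h0
        · rw [max_eq_left h0, ← abs_of_nonneg h0]; exact hTy j0
        · rw [max_eq_right h0.le]; exact hT0
      have hBT : v (x j0) ∈ T := by rw [← abs_of_pos hcase]; exact hTx j0
      obtain ⟨iA, hiAn, hciA⟩ := hmemT _ hAT
      obtain ⟨iB, hiBn, hciB⟩ := hmemT _ hBT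
      have hiAB : iA < iB := by
        by_contra hcon
        push_neg at hcon
        have := hc hcon
        rw [hciA, hciB] at this
        linarith
      refine ⟨iB - 1, mem_range.mpr (by omega), ?_⟩
      have hidx : iB - 1 + 1 = iB := by omega
      rw [hidx, hciB]
      have hΔpos : 0 < v (x j0) - c (iB - 1) := by
        have := hcstrict (iB - 1) iB (by omega) hiBn
        rw [hciB] at this
        linarith
      have hstrictG :
          ∑ j ∈ univ.filter (fun j => v (x j0) ≤ v (y j)), p j
            < ∑ j ∈ univ.filter (fun j => v (x j0) ≤ v (x j)), p j := by
        rw [sum_filter, sum_filter]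
        apply Finset.sum_lt_sum
        · intro j _
          by_cases hpj : 0 < p j
          · by_cases hyj : v (x j0) ≤ v (y j)
            · rw [if_pos hyj, if_pos (le_trans hyj (hv.monotone (hdom j hpj)))]
            · rw [if_neg hyj]
              split
              · exact hp.1 j
              · exact le_rfl
          · have hz : p j = 0 := le_antisymm (not_lt.mp hpj) (hp.1 j)
            split_ifs <;> simp [hz]
        · refine ⟨j0, mem_univ j0, ?_⟩
          rw [if_neg (by
              apply not_le.mpr
              have h3 : v (y j0) ≤ max (v (y j0)) 0 := le_max_left _ _
              linarith),
            if_pos le_rfl]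
          exact hpj0
      have h1 : wp (∑ j ∈ univ.filter (fun j => v (x j0) ≤ v (y j)), p j)
          < wp (∑ j ∈ univ.filter (fun j => v (x j0) ≤ v (x j)), p j) :=
        hwpm (filter_sum_mem_Icc p hp _) (filter_sum_mem_Icc p hp _) hstrictG
      have h2 : wm (∑ j ∈ univ.filter (fun j => v (x j) ≤ -(v (x j0))), p j)
          ≤ wm (∑ j ∈ univ.filter (fun j => v (y j) ≤ -(v (x j0))), p j) :=
        hwmm.monotoneOn (filter_sum_mem_Icc p hp _) (filter_sum_mem_Icc p hp _) (hHle _)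
      apply mul_lt_mul_of_pos_right _ hΔpos
      linarith
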